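/- Let V be a real normed space with dual V*, ψ: V → (-∞,∞] proper lower semicontinuous convex with ψ ≥ 0, p ∈ (1,∞) with conjugate p', and suppose there are constants C₃, C₄ ≥ 0 such that |η|_{V*}^{p'} ≤ C₃ ψ(u) + C₄ whenever η ∈ ∂ψ(u). Then there exists a constant C₅ ≥ 0 such that (1/2) ψ(u) ≤ ⟨η, u⟩ + C₅ for all u ∈ D(∂ψ) and η ∈ ∂ψ(u). -/

import Mathlib

open NormedSpace

theorem stmt5 {V : Type*} [NormedAddCommGroup V] [NormedSpace ℝ V]
    (ψ : V → EReal) (hpos : ∀ v, (0 : EReal) ≤ ψ v) (hproper : ∃ v, ψ v ≠ ⊤)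
    (hlsc : LowerSemicontinuous ψ)
    (hconv : ∀ u v : V, ∀ a b : ℝ, 0 ≤ a → 0 ≤ b → a + b = 1 →
      ψ (a • u + b • v) ≤ (a : EReal) * ψ u + (b : EReal) * ψ v)
    (p : ℝ) (hp : 1 < p) (p' : ℝ) (hp' : p' = p / (p - 1))
    (C₃ C₄ : ℝ) (hC₃ : 0 ≤ C₃) (hC₄ : 0 ≤ C₄)
    (hgrowth : ∀ (u : V) (η : StrongDual ℝ V),
      (ψ u ≠ ⊤ ∧ ∀ v, ((η (v - u) : ℝ) : EReal) ≤ ψ v - ψ u) →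
      ((‖η‖ ^ p' : ℝ) : EReal) ≤ (C₃ : EReal) * ψ u + (C₄ : EReal)) :
    ∃ C₅ : ℝ, 0 ≤ C₅ ∧ ∀ (u : V) (η : StrongDual ℝ V),
      (ψ u ≠ ⊤ ∧ ∀ v, ((η (v - u) : ℝ) : EReal) ≤ ψ v - ψ u) →
      ((1 / 2 : ℝ) : EReal) * ψ u ≤ ((η u : ℝ) : EReal) + (C₅ : EReal) := by
  obtain ⟨v₀, hv₀⟩ := hproper
  have hp'1 : 1 < p' := by
    rw [hp']
    rw [one_lt_div (by linarith)]
    linarith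
  have hconj : p'.HolderConjugate p :=
    ((Real.holderConjugate_iff_eq_conjExponent hp).2 hp').symm
  set ε : ℝ := 1 / (2 * (C₃ + 1)) with hε
  have hεpos : 0 < ε := by positivity
  set c : ℝ := min ε 1 with hc
  have hcpos : 0 < c := lt_min hεpos one_pos
  have hc1 : c ≤ 1 := min_le_right _ _
  set K : ℝ := (‖v₀‖ / c) ^ p / p with hK
  have hKnn : 0 ≤ K := by positivity
  -- b := ψ v₀ as a real
  have hv₀bot : ψ v₀ ≠ ⊥ := fun h => by simpa [h] using hpos v₀
  set b : ℝ := (ψ v₀).toReal with hb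
  have hbeq : ψ v₀ = (b : EReal) := (EReal.coe_toReal hv₀ hv₀bot).symm
  have hbnn : 0 ≤ b := by
    have := hpos v₀; rw [hbeq] at this; exact_mod_cast this
  refine ⟨b + ε * C₄ + K, by positivity, ?_⟩
  rintro u η ⟨hutop, hsub⟩
  have hubot : ψ u ≠ ⊥ := fun h => by simpa [h] using hpos u
  set a : ℝ := (ψ u).toReal with ha
  have haeq : ψ u = (a : EReal) := (EReal.coe_toReal hutop hubot).symm
  have hann : 0 ≤ a := by
    have := hpos u; rw [haeq] at this; exact_mod_cast this
  -- subgradient inequality at v₀, in reals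
  have h1 : η (v₀ - u) ≤ b - a := by
    have := hsub v₀
    rw [haeq, hbeq, ← EReal.coe_sub] at this
    exact_mod_cast this
  -- growth in reals
  have h2 : ‖η‖ ^ p' ≤ C₃ * a + C₄ := by
    have := hgrowth u η ⟨hutop, hsub⟩
    rw [haeq, ← EReal.coe_mul, ← EReal.coe_add] at this
    exact_mod_cast this
  -- Young's inequality : ‖η‖ * ‖v₀‖ ≤ ε * ‖η‖^p' + K
  have hyoung : ‖η‖ * ‖v₀‖ ≤ ε * ‖η‖ ^ p' + K := by
    have h3 : (c * ‖η‖) * (‖v₀‖ / c) ≤ (c * ‖η‖) ^ p' / p' + (‖v₀‖ / c) ^ p / p :=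
      Real.young_inequality_of_nonneg (by positivity) (by positivity) hconj
    have h4 : (c * ‖η‖) * (‖v₀‖ / c) = ‖η‖ * ‖v₀‖ := by
      field_simp
    have h5 : (c * ‖η‖) ^ p' = c ^ p' * ‖η‖ ^ p' :=
      Real.mul_rpow hcpos.le (norm_nonneg _)
    have h6 : c ^ p' ≤ ε := by
      calc c ^ p' ≤ c ^ (1:ℝ) :=
            Real.rpow_le_rpow_of_exponent_ge hcpos hc1 hp'1.le
        _ = c := Real.rpow_one c
        _ ≤ ε := min_le_left _ _
    have h7 : c ^ p' * ‖η‖ ^ p' / p' ≤ ε * ‖η‖ ^ p' := by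
      have hη : 0 ≤ ‖η‖ ^ p' := Real.rpow_nonneg (norm_nonneg _) _
      have := mul_le_mul_of_nonneg_right h6 hη
      calc c ^ p' * ‖η‖ ^ p' / p' ≤ c ^ p' * ‖η‖ ^ p' := by
            apply div_le_self (by positivity) hp'1.le
        _ ≤ ε * ‖η‖ ^ p' := this
    rw [h4, h5] at h3
    exact h3.trans (by gcongr)
  -- bound -η v₀
  have h8 : -η v₀ ≤ ‖η‖ * ‖v₀‖ := by
    have h := η.le_opNorm v₀
    rw [Real.norm_eq_abs] at h
    linarith [neg_abs_le (η v₀)]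
  have h9 : η (v₀ - u) = η v₀ - η u := map_sub η v₀ u
  have hεC₃ : ε * C₃ ≤ 1 / 2 := by
    rw [hε]
    rw [div_mul_eq_mul_div, one_mul, div_le_div_iff₀ (by positivity) (by norm_num)]
    linarith
  have hmain : (1 / 2 : ℝ) * a ≤ η u + (b + ε * C₄ + K) := by
    have e1 : ε * ‖η‖ ^ p' ≤ ε * (C₃ * a + C₄) :=
      mul_le_mul_of_nonneg_left h2 hεpos.le
    have e2 : ε * (C₃ * a) ≤ (1 / 2) * a := by
      have := mul_le_mul_of_nonneg_right hεC₃ hann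
      nlinarith
    nlinarith [hyoung]
  rw [haeq, ← EReal.coe_mul, ← EReal.coe_add]
  exact_mod_cast hmain
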